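/- Under scheduling governed by anti-monotonic validity predicates V_f (depending on the function f being scheduled), two distinct functions f and g can co-occur in some state reachable from the empty state if and only if one of the following holds: V_f(0) and V_g({f}), or V_g(0) and V_f({g}). -/

import Mathlib

def AntiMono {F : Type*} (P : Multiset F → Prop) : Prop :=
  ∀ σ' σ : Multiset F, σ' ≤ σ → P σ → P σ'

/-- One step: add function `h` when `V h` holds of the current state, or remove one occurrence. -/
def Step {F : Type*} [DecidableEq F] (V : F → Multiset F → Prop) (σ τ : Multiset F) : Prop :=
  (∃ h : F, V h σ ∧ τ = h ::ₘ σ) ∨ (∃ h ∈ σ, τ = σ.erase h)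

def Reach {F : Type*} [DecidableEq F] (V : F → Multiset F → Prop) (σ : Multiset F) : Prop :=
  Relation.ReflTransGen (Step V) 0 σ

theorem coOccurrence_characterization {F : Type*} [DecidableEq F]
    (V : F → Multiset F → Prop) (hV : ∀ h, AntiMono (V h)) (f g : F) (hfg : f ≠ g) :
    (∃ σ : Multiset F, Reach V σ ∧ f ∈ σ ∧ g ∈ σ) ↔
      (V f 0 ∧ V g {f}) ∨ (V g 0 ∧ V f {g}) := by
  constructor
  · rintro ⟨σ, hreach, hf, hg⟩
    set cond := (V f 0 ∧ V g {f}) ∨ (V g 0 ∧ V f {g}) with hc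
    suffices h : (f ∈ σ → V f 0) ∧ (g ∈ σ → V g 0) ∧ (f ∈ σ → g ∈ σ → cond) by
      exact h.2.2 hf hg
    clear hf hg
    induction hreach with
    | refl => simp
    | @tail b c _ hstep ih =>
      obtain ⟨hfa, hga, hcond⟩ := ih
      rcases hstep with ⟨h, hVh, rfl⟩ | ⟨h, hh, rfl⟩
      · refine ⟨?_, ?_, ?_⟩
        · intro hf
          rcases Multiset.mem_cons.mp hf with rfl | hf
          · exact hV f _ _ zero_le hVh
          · exact hfa hf
        · intro hg
          rcases Multiset.mem_cons.mp hg with rfl | hg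
          · exact hV g _ _ zero_le hVh
          · exact hga hg
        · intro hf hg
          rcases Multiset.mem_cons.mp hf with rfl | hf'
          · rcases Multiset.mem_cons.mp hg with rfl | hg'
            · exact absurd rfl hfg
            · exact Or.inr ⟨hga hg', hV f _ _ (Multiset.singleton_le.mpr hg') hVh⟩
          · rcases Multiset.mem_cons.mp hg with rfl | hg'
            · exact Or.inl ⟨hfa hf', hV g _ _ (Multiset.singleton_le.mpr hf') hVh⟩
            · exact hcond hf' hg'
      · have hle : Multiset.erase b h ≤ b := Multiset.erase_le h b
        exact ⟨fun hf => hfa (Multiset.mem_of_le hle hf),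
               fun hg => hga (Multiset.mem_of_le hle hg),
               fun hf hg => hcond (Multiset.mem_of_le hle hf) (Multiset.mem_of_le hle hg)⟩
  · rintro (⟨h1, h2⟩ | ⟨h1, h2⟩)
    · refine ⟨g ::ₘ {f}, ?_, ?_, ?_⟩
      · exact Relation.ReflTransGen.tail (Relation.ReflTransGen.single
          (Or.inl ⟨f, h1, rfl⟩)) (Or.inl ⟨g, h2, rfl⟩)
      · simp
      · simp
    · refine ⟨f ::ₘ {g}, ?_, ?_, ?_⟩
      · exact Relation.ReflTransGen.tail (Relation.ReflTransGen.single
          (Or.inl ⟨g, h1, rfl⟩)) (Or.inl ⟨f, h2, rfl⟩)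
      · simp
      · simp
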